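/- (Hook formula.) For every Young diagram λ with n = |λ| boxes, dim λ = n! · ∏_{b∈λ} h(b)^{-1}, where dim λ is the number of standard Young tableaux of shape λ and h(b) is the hook length of the box b. -/

import Mathlib

/-- `ν` is obtained from `μ` by adding a single box (`μ ↗ ν`). -/
def YDCovers (μ ν : YoungDiagram) : Prop :=
  ∃ c ∉ μ.cells, ν.cells = insert c μ.cells

/-- `dim λ`: the number of standard Young tableaux of shape `λ`, i.e. the number of
chains `∅ = λ⁰ ↗ λ¹ ↗ ⋯ ↗ λⁿ = λ` in the Young lattice. -/
noncomputable def dimYD (μ : YoungDiagram) : ℕ :=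
  Nat.card {L : List YoungDiagram //
    List.Chain' YDCovers L ∧ L.head? = some ⊥ ∧ L.getLast? = some μ}

/-- The arm length `a(b) = λᵢ − j` of a box `b = (i,j)` (0-indexed). -/
def armLen (μ : YoungDiagram) (b : ℕ × ℕ) : ℕ := μ.rowLen b.1 - b.2 - 1

/-- The leg length `l(b) = λ′ⱼ − i` of a box `b = (i,j)` (0-indexed). -/
def legLen (μ : YoungDiagram) (b : ℕ × ℕ) : ℕ := μ.colLen b.2 - b.1 - 1

/-- The hook length `h(b) = a(b) + l(b) + 1`. -/
def hookLen (μ : YoungDiagram) (b : ℕ × ℕ) : ℕ := armLen μ b + legLen μ b + 1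


section HookProofAux

open Polynomial Finset

variable {F : Type*} [Field F]

-- monic product facts
lemma natDegree_prodXsubC (s : Finset ℕ) (v : ℕ → F) :
    (∏ j ∈ s, (X - C (v j))).natDegree = s.card := by
  rw [Polynomial.natDegree_prod]
  · simp [Polynomial.natDegree_X_sub_C]
  · intro i _; exact Polynomial.X_sub_C_ne_zero _

lemma monic_prodXsubC (s : Finset ℕ) (v : ℕ → F) :
    (∏ j ∈ s, (X - C (v j))).Monic :=
  monic_prod_of_monic _ _ fun i _ => monic_X_sub_C _

lemma coeff_prodXsubC_card (s : Finset ℕ) (v : ℕ → F) :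
    (∏ j ∈ s, (X - C (v j))).coeff s.card = 1 := by
  have h := (monic_prodXsubC s v).coeff_natDegree
  rwa [natDegree_prodXsubC] at h

lemma coeff_prodXsubC_gt (s : Finset ℕ) (v : ℕ → F) {k : ℕ} (hk : s.card < k) :
    (∏ j ∈ s, (X - C (v j))).coeff k = 0 := by
  apply Polynomial.coeff_eq_zero_of_natDegree_lt
  rwa [natDegree_prodXsubC]

lemma coeff_prodXsubC (s : Finset ℕ) (v : ℕ → F) {k : ℕ} (hk : k ≤ s.card) :
    (∏ j ∈ s, (X - C (v j))).coeff k
      = ∑ t ∈ s.powersetCard (s.card - k), ∏ i ∈ t, (-v i) := by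
  have : ∀ j, X - C (v j) = X + C (-(v j)) := by intro j; rw [map_neg, sub_eq_add_neg]
  simp_rw [this]
  exact Finset.prod_X_add_C_coeff s (fun i => -(v i)) hk

-- Lagrange lemma: leading coefficient extraction
lemma lagrange_sum_coeff (s : Finset ℕ) (v : ℕ → F) (hv : Set.InjOn v s)
    (f : F[X]) (hf : f.degree < s.card) :
    ∑ i ∈ s, f.eval (v i) * (∏ j ∈ s.erase i, (v i - v j))⁻¹ = f.coeff (s.card - 1) := by
  conv_rhs => rw [Lagrange.eq_interpolate hv hf]
  rw [Lagrange.interpolate_apply, Polynomial.finset_sum_coeff]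
  refine Finset.sum_congr rfl fun i hi => ?_
  rw [Polynomial.coeff_C_mul]
  congr 1
  -- coeff of basis at card - 1
  rw [Lagrange.basis]
  have : ∀ j ∈ s.erase i, Lagrange.basisDivisor (v i) (v j)
      = C ((v i - v j)⁻¹) * (X - C (v j)) := fun j _ => rfl
  have hc : (s.erase i).card = s.card - 1 := Finset.card_erase_of_mem hi
  rw [Finset.prod_congr rfl this, Finset.prod_mul_distrib, ← map_prod,
    Polynomial.coeff_C_mul, ← Finset.prod_inv_distrib, ← hc, coeff_prodXsubC_card, mul_one]

-- counting lemma
lemma card_filter_mem_powersetCard_two (s : Finset ℕ) {i : ℕ} (hi : i ∈ s) :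
    ((s.powersetCard 2).filter (fun t => i ∈ t)).card = s.card - 1 := by
  rw [← Finset.card_erase_of_mem hi]
  apply (Finset.card_bij (fun j _ => insert i {j}) ?_ ?_ ?_).symm
  · intro j hj
    rw [Finset.mem_erase] at hj
    rw [Finset.mem_filter, Finset.mem_powersetCard]
    refine ⟨⟨?_, ?_⟩, by simp⟩
    · intro a ha
      simp only [Finset.mem_insert, Finset.mem_singleton] at ha
      rcases ha with rfl | rfl
      · exact hi
      · exact hj.2
    · rw [Finset.card_insert_of_notMem (by simp [hj.1.symm] : i ∉ ({j} : Finset ℕ))]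
      simp
  · intro a ha b hb hab
    rw [Finset.mem_erase] at ha hb
    have : a ∈ insert i ({b} : Finset ℕ) := by
      rw [← hab]; simp
    simp only [Finset.mem_insert, Finset.mem_singleton] at this
    rcases this with h | h
    · exact absurd h ha.1
    · exact h
  · intro t ht
    rw [Finset.mem_filter, Finset.mem_powersetCard] at ht
    obtain ⟨⟨hts, htc⟩, hit⟩ := ht
    obtain ⟨a, b, hab, rfl⟩ := Finset.card_eq_two.mp htc
    simp only [Finset.mem_insert, Finset.mem_singleton] at hit
    rcases hit with rfl | rfl
    · exact ⟨b, Finset.mem_erase.mpr ⟨fun h => hab h.symm, hts (by simp)⟩, rfl⟩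
    · refine ⟨a, Finset.mem_erase.mpr ⟨fun h => hab h, hts (by simp)⟩, ?_⟩
      rw [Finset.pair_comm]

lemma sum_powersetCard_two_sum (s : Finset ℕ) (x : ℕ → ℝ) :
    ∑ t ∈ s.powersetCard 2, ∑ i ∈ t, x i = (s.card - 1) • ∑ i ∈ s, x i := by
  have h1 : ∀ t ∈ s.powersetCard 2, ∑ i ∈ t, x i = ∑ i ∈ s.filter (· ∈ t), x i := by
    intro t ht
    rw [Finset.mem_powersetCard] at ht
    congr 1
    rw [Finset.filter_mem_eq_inter, Finset.inter_eq_right.mpr ht.1]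
  rw [Finset.sum_congr rfl h1]
  simp_rw [Finset.sum_filter]
  rw [Finset.sum_comm]
  rw [Finset.smul_sum, Finset.sum_congr rfl]
  intro i hi
  rw [← Finset.sum_filter, Finset.sum_const, card_filter_mem_powersetCard_two s hi]

lemma pair_neg_prod {t : Finset ℕ} (ht : t.card = 2) (v : ℕ → ℝ) :
    ∏ i ∈ t, (-v i) = ∏ i ∈ t, v i := by
  obtain ⟨a, b, hab, rfl⟩ := Finset.card_eq_two.mp ht
  rw [Finset.prod_pair hab, Finset.prod_pair hab]; ring

lemma pair_shift_prod {t : Finset ℕ} (ht : t.card = 2) (v : ℕ → ℝ) :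
    ∏ i ∈ t, (v i + 1) = ∏ i ∈ t, v i + (∑ i ∈ t, v i + 1) := by
  obtain ⟨a, b, hab, rfl⟩ := Finset.card_eq_two.mp ht
  rw [Finset.prod_pair hab, Finset.prod_pair hab, Finset.sum_pair hab]; ring

lemma key_identity (m : ℕ) (x : ℕ → ℝ) (hx : Set.InjOn x (Finset.range m)) :
    ∑ r ∈ Finset.range m, x r * ∏ j ∈ (Finset.range m).erase r, ((x r - 1 - x j) / (x r - x j))
      = (∑ r ∈ Finset.range m, x r) - (m.choose 2 : ℝ) := by
  rcases Nat.lt_or_ge m 2 with hm | hm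
  · interval_cases m
    · simp
    · simp
  set s := Finset.range m with hs
  have hcard : s.card = m := Finset.card_range m
  set P : ℝ[X] := ∏ j ∈ s, (X - C (x j)) with hP
  set Ps : ℝ[X] := ∏ j ∈ s, (X - C (x j + 1)) with hPs
  set R : ℝ[X] := X * Ps - (X - C (m : ℝ)) * P with hR
  set e1 : ℝ := ∑ r ∈ s, x r with he1
  -- coefficients of P
  have cP_top : P.coeff m = 1 := by rw [hP, ← hcard]; exact coeff_prodXsubC_card s x
  have cP_hi : ∀ k, m < k → P.coeff k = 0 := fun k hk => coeff_prodXsubC_gt s x (hcard ▸ hk)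
  have hndP : P.natDegree = m := by rw [hP, natDegree_prodXsubC, hcard]
  have cP1 : P.coeff (m - 1) = -e1 := by
    have h := prod_X_sub_C_nextCoeff (s := s) x
    rwa [Polynomial.nextCoeff_of_natDegree_pos (by omega : 0 < P.natDegree), hndP] at h
  have cP2 : P.coeff (m - 2) = ∑ t ∈ s.powersetCard 2, ∏ i ∈ t, x i := by
    rw [hP, coeff_prodXsubC s x (by omega : m - 2 ≤ s.card)]
    rw [hcard]
    have h2 : m - (m - 2) = 2 := by omega
    rw [h2]
    exact Finset.sum_congr rfl fun t ht =>
      pair_neg_prod (Finset.mem_powersetCard.mp ht).2 x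
  -- coefficients of Ps
  have cPs_top : Ps.coeff m = 1 := by rw [hPs, ← hcard]; exact coeff_prodXsubC_card s _
  have cPs_hi : ∀ k, m < k → Ps.coeff k = 0 := fun k hk => coeff_prodXsubC_gt s _ (hcard ▸ hk)
  have hndPs : Ps.natDegree = m := by rw [hPs, natDegree_prodXsubC, hcard]
  have cPs1 : Ps.coeff (m - 1) = -e1 - m := by
    have h := prod_X_sub_C_nextCoeff (s := s) (fun j => x j + 1)
    rw [Polynomial.nextCoeff_of_natDegree_pos (by omega : 0 < Ps.natDegree), hndPs] at h
    rw [h, Finset.sum_add_distrib, Finset.sum_const, hcard]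
    push_cast
    ring
  have cPs2 : Ps.coeff (m - 2)
      = ∑ t ∈ s.powersetCard 2, ∏ i ∈ t, (x i + 1) := by
    rw [hPs, coeff_prodXsubC s _ (by omega : m - 2 ≤ s.card)]
    rw [hcard]
    have h2 : m - (m - 2) = 2 := by omega
    rw [h2]
    exact Finset.sum_congr rfl fun t ht =>
      pair_neg_prod (Finset.mem_powersetCard.mp ht).2 _
  -- linear-factor coefficient helper
  have hlin : ∀ (c : ℝ) (p : ℝ[X]) (k : ℕ),
      ((X - C c) * p).coeff (k + 1) = p.coeff k - c * p.coeff (k + 1) := by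
    intro c p k
    rw [sub_mul, Polynomial.coeff_sub, Polynomial.coeff_X_mul, Polynomial.coeff_C_mul]
  -- degree bound
  have hdeg : R.degree < (s.card : WithBot ℕ) := by
    rw [Polynomial.degree_lt_iff_coeff_zero]
    intro k hk
    rw [hcard] at hk
    have hk' : m ≤ k := by exact_mod_cast hk
    obtain ⟨k', rfl⟩ : ∃ k', k = k' + 1 := ⟨k - 1, by omega⟩
    rw [hR, Polynomial.coeff_sub, Polynomial.coeff_X_mul, hlin]
    rcases Nat.lt_trichotomy (k' + 1) m with h | h | h
    · omega
    · have h1 : k' = m - 1 := by omega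
      rw [h1, cPs1, cP1]
      rw [show m - 1 + 1 = m by omega, cP_top]
      ring
    · rw [cP_hi _ h]
      rcases Nat.lt_trichotomy k' m with h' | h' | h'
      · omega
      · subst h'
        rw [cPs_top, cP_top]; ring
      · rw [cPs_hi _ h', cP_hi _ (by omega : m < k')]; ring
  -- evaluation at nodes
  have heval : ∀ r ∈ s, R.eval (x r)
      = -(x r * ∏ j ∈ s.erase r, (x r - 1 - x j)) := by
    intro r hr
    have hPz : P.eval (x r) = 0 := by
      rw [hP, Polynomial.eval_prod]
      exact Finset.prod_eq_zero hr (by simp)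
    rw [hR, Polynomial.eval_sub, Polynomial.eval_mul, Polynomial.eval_mul, hPz, mul_zero,
      sub_zero, Polynomial.eval_X, hPs, Polynomial.eval_prod]
    have : ∀ j ∈ s, Polynomial.eval (x r) (X - C (x j + 1)) = x r - 1 - x j := by
      intro j _; simp; ring
    rw [Finset.prod_congr rfl this, ← Finset.mul_prod_erase s _ hr]
    ring
  -- Lagrange
  have hmain := lagrange_sum_coeff s x hx R hdeg
  have hRcoeff : R.coeff (m - 1) = (m.choose 2 : ℝ) - e1 := by
    obtain ⟨k', hk'⟩ : ∃ k', m - 1 = k' + 1 := ⟨m - 2, by omega⟩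
    have hk2 : k' = m - 2 := by omega
    rw [hk', hR, Polynomial.coeff_sub, Polynomial.coeff_X_mul, hlin, hk2,
      show m - 2 + 1 = m - 1 from by omega, cP1, cPs2, cP2]
    have hsum1 : ∑ t ∈ s.powersetCard 2, ∏ i ∈ t, (x i + 1)
        = ∑ t ∈ s.powersetCard 2, (∏ i ∈ t, x i + (∑ i ∈ t, x i + 1)) :=
      Finset.sum_congr rfl fun t ht => pair_shift_prod (Finset.mem_powersetCard.mp ht).2 x
    rw [hsum1, Finset.sum_add_distrib, Finset.sum_add_distrib, sum_powersetCard_two_sum s x,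
      Finset.sum_const, Finset.card_powersetCard, hcard, nsmul_eq_mul, nsmul_eq_mul,
      Nat.cast_sub (by omega : 1 ≤ m)]
    push_cast
    ring
  have hL : ∑ i ∈ s, R.eval (x i) * (∏ j ∈ s.erase i, (x i - x j))⁻¹
      = -∑ r ∈ s, x r * ∏ j ∈ s.erase r, ((x r - 1 - x j) / (x r - x j)) := by
    rw [← Finset.sum_neg_distrib]
    refine Finset.sum_congr rfl fun r hr => ?_
    rw [heval r hr, Finset.prod_div_distrib, div_eq_mul_inv]
    ring
  rw [hL, hcard, hRcoeff] at hmain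
  have := neg_eq_iff_eq_neg.mp hmain
  rw [hs] at *
  linarith [hmain]


namespace HookAux

/-- removable corners -/
def corners (ν : YoungDiagram) : Finset (ℕ × ℕ) :=
  ν.cells.filter fun c => (c.1 + 1, c.2) ∉ ν ∧ (c.1, c.2 + 1) ∉ ν

lemma mem_corners {ν : YoungDiagram} {c : ℕ × ℕ} :
    c ∈ corners ν ↔ c ∈ ν ∧ (c.1 + 1, c.2) ∉ ν ∧ (c.1, c.2 + 1) ∉ ν := by
  simp [corners, YoungDiagram.mem_cells]

/-- erase a corner cell -/
def eraseCell (ν : YoungDiagram) (c : ℕ × ℕ) (hc : c ∈ corners ν) : YoungDiagram :=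
  ⟨ν.cells.erase c, by
    rw [mem_corners] at hc
    rintro ⟨q1, q2⟩ ⟨p1, p2⟩ hle hq
    simp only [Finset.coe_erase, Set.mem_diff, Finset.mem_coe, Finset.coe_mem,
      Set.mem_singleton_iff] at hq ⊢
    obtain ⟨hqν, hqc⟩ := hq
    rw [YoungDiagram.mem_cells] at hqν
    obtain ⟨hle1, hle2⟩ : p1 ≤ q1 ∧ p2 ≤ q2 := ⟨hle.1, hle.2⟩
    have hpν : (p1, p2) ∈ ν := ν.up_left_mem hle1 hle2 hqν
    rw [YoungDiagram.mem_cells]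
    refine ⟨hpν, ?_⟩
    rintro rfl
    rcases lt_or_eq_of_le hle1 with h1 | h1
    · exact hc.2.1 (ν.up_left_mem h1 hle2 hqν)
    · rcases lt_or_eq_of_le hle2 with h2 | h2
      · exact hc.2.2 (ν.up_left_mem (le_of_eq h1) h2 hqν)
      · exact hqc (Prod.ext h1 h2).symm⟩

lemma mem_eraseCell {ν : YoungDiagram} {c : ℕ × ℕ} (hc : c ∈ corners ν) {p : ℕ × ℕ} :
    p ∈ eraseCell ν c hc ↔ p ∈ ν ∧ p ≠ c := by
  show p ∈ Finset.erase _ _ ↔ _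
  rw [Finset.mem_erase]
  exact ⟨fun h => ⟨h.2, h.1⟩, fun h => ⟨h.2, h.1⟩⟩

lemma card_eraseCell {ν : YoungDiagram} {c : ℕ × ℕ} (hc : c ∈ corners ν) :
    (eraseCell ν c hc).card = ν.card - 1 := by
  show (ν.cells.erase c).card = _
  rw [Finset.card_erase_of_mem]
  rw [mem_corners] at hc
  exact hc.1

lemma covers_iff {μ ν : YoungDiagram} :
    YDCovers μ ν ↔ ∃ (c : ℕ × ℕ) (hc : c ∈ corners ν), μ = eraseCell ν c hc := by
  constructor
  · rintro ⟨c, hc, hins⟩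
    have hcν : c ∈ ν := by rw [← YoungDiagram.mem_cells, hins]; exact Finset.mem_insert_self _ _
    have hcorner : c ∈ corners ν := by
      rw [mem_corners]
      refine ⟨hcν, ?_, ?_⟩
      · intro h
        rw [← YoungDiagram.mem_cells, hins, Finset.mem_insert] at h
        rcases h with h | h
        · exact absurd (congrArg Prod.fst h) (by simp)
        · exact hc (μ.up_left_mem (Nat.le_succ _) le_rfl h)
      · intro h
        rw [← YoungDiagram.mem_cells, hins, Finset.mem_insert] at h
        rcases h with h | h
        · exact absurd (congrArg Prod.snd h) (by simp)
        · exact hc (μ.up_left_mem le_rfl (Nat.le_succ _) h)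
    refine ⟨c, hcorner, ?_⟩
    have : μ.cells = (eraseCell ν c hcorner).cells := by
      show μ.cells = ν.cells.erase c
      rw [hins, Finset.erase_insert hc]
    ext p
    rw [this]
  · rintro ⟨c, hc, rfl⟩
    refine ⟨c, ?_, ?_⟩
    · show c ∉ ν.cells.erase c
      exact Finset.notMem_erase _ _
    · show ν.cells = insert c (ν.cells.erase c)
      rw [mem_corners] at hc
      rw [Finset.insert_erase ((YoungDiagram.mem_cells c).mpr hc.1)]

lemma covers_card {μ ν : YoungDiagram} (h : YDCovers μ ν) : ν.card = μ.card + 1 := by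
  obtain ⟨c, hc, hins⟩ := h
  show ν.cells.card = _
  rw [hins, Finset.card_insert_of_notMem hc]

/-- the chain set -/
def ChainSet (ν : YoungDiagram) : Type :=
  {L : List YoungDiagram //
    List.Chain' YDCovers L ∧ L.head? = some ⊥ ∧ L.getLast? = some ν}

lemma chain_card : ∀ (L : List YoungDiagram), L.Chain' YDCovers →
    ∀ a b, L.head? = some a → L.getLast? = some b → b.card + 1 = a.card + L.length := by
  intro L
  induction L with
  | nil => intro _ a b h _; simp at h
  | cons x t ih =>
    intro hch a b ha hb
    simp only [List.head?_cons, Option.some.injEq] at ha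
    subst ha
    cases t with
    | nil =>
      simp only [List.getLast?_singleton, Option.some.injEq] at hb
      subst hb; simp
    | cons y t' =>
      have hcov : YDCovers x y := (List.isChain_cons_cons.mp hch).1
      have hch' : List.Chain' YDCovers (y :: t') := (List.isChain_cons_cons.mp hch).2
      have hb' : (y :: t').getLast? = some b := by
        rwa [List.getLast?_cons_cons] at hb
      have := ih hch' y b rfl hb'
      have hcard := covers_card hcov
      simp only [List.length_cons] at *
      omega

end HookAux

namespace HookAux

lemma bot_card : (⊥ : YoungDiagram).card = 0 := by
  show (⊥ : YoungDiagram).cells.card = 0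
  simp

lemma eq_bot_of_card_eq_zero {ν : YoungDiagram} (h : ν.card = 0) : ν = ⊥ := by
  have : ν.cells = ∅ := Finset.card_eq_zero.mp h
  ext p
  rw [this, YoungDiagram.cells_bot]

lemma dimYD_eq (ν : YoungDiagram) : dimYD ν = Nat.card (ChainSet ν) := rfl

lemma chainSet_bot_eq (L : ChainSet ⊥) : L.1 = [(⊥ : YoungDiagram)] := by
  obtain ⟨L, hch, hhd, hlast⟩ := L
  have hlen := chain_card L hch ⊥ ⊥ hhd hlast
  rw [bot_card] at hlen
  have : L.length = 1 := by omega
  obtain ⟨a, rfl⟩ := List.length_eq_one_iff.mp this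
  simp only [List.head?_cons, Option.some.injEq] at hhd
  subst hhd
  rfl

lemma dimYD_bot : dimYD ⊥ = 1 := by
  rw [dimYD_eq, Nat.card_eq_one_iff_exists]
  refine ⟨⟨[⊥], ?_, rfl, rfl⟩, fun L => ?_⟩
  · exact List.isChain_singleton _
  · apply Subtype.ext
    rw [chainSet_bot_eq L]

/-- attach a final diagram to a chain -/
def toChain (ν : YoungDiagram) :
    (Σ c : {c // c ∈ corners ν}, ChainSet (eraseCell ν c.1 c.2)) → ChainSet ν :=
  fun p => ⟨p.2.1 ++ [ν], by
    rcases p with ⟨⟨c, hc⟩, ⟨L, hch, hhd, hlast⟩⟩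
    have hLne : L ≠ [] := by rintro rfl; simp at hhd
    refine ⟨?_, ?_, ?_⟩
    · change List.IsChain _ _
      rw [List.isChain_append]
      refine ⟨hch, List.isChain_singleton _, ?_⟩
      intro x hx y hy
      simp only [List.head?_cons, Option.mem_def, Option.some.injEq] at hy
      subst hy
      rw [Option.mem_def, hlast, Option.some.injEq] at hx
      subst hx
      exact covers_iff.mpr ⟨c, hc, rfl⟩
    · rwa [List.head?_append_of_ne_nil _ hLne]
    · simp⟩

lemma eraseCell_inj {ν : YoungDiagram} {c c' : ℕ × ℕ} (hc : c ∈ corners ν)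
    (hc' : c' ∈ corners ν) (h : eraseCell ν c hc = eraseCell ν c' hc') : c = c' := by
  by_contra hne
  have hcells : ν.cells.erase c = ν.cells.erase c' := congrArg YoungDiagram.cells h
  have hcmem : c ∈ ν.cells := (YoungDiagram.mem_cells c).mpr (mem_corners.mp hc).1
  have : c ∈ ν.cells.erase c' := Finset.mem_erase.mpr ⟨hne, hcmem⟩
  rw [← hcells] at this
  exact Finset.notMem_erase c _ this

lemma toChain_bijective {ν : YoungDiagram} (hν : ν ≠ ⊥) :
    Function.Bijective (toChain ν) := by
  constructor
  · rintro ⟨⟨c, hc⟩, ⟨L, hch, hhd, hlast⟩⟩ ⟨⟨c', hc'⟩, ⟨L', hch', hhd', hlast'⟩⟩ heq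
    have hLL : L ++ [ν] = L' ++ [ν] := congrArg Subtype.val heq
    have hL : L = L' := by
      have := congrArg List.reverse hLL
      simp only [List.reverse_append, List.reverse_cons, List.reverse_nil,
        List.nil_append, List.singleton_append, List.cons.injEq] at this
      have := this.2
      exact List.reverse_injective this
    subst hL
    have : eraseCell ν c hc = eraseCell ν c' hc' := by
      rw [hlast] at hlast'
      exact Option.some.inj hlast'
    have hcc : c = c' := eraseCell_inj hc hc' this
    subst hcc
    rfl
  · rintro ⟨L, hch, hhd, hlast⟩
    have hLne : L ≠ [] := by rintro rfl; simp at hhd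
    have hdecomp : L.dropLast ++ [ν] = L := List.dropLast_append_getLast? ν hlast
    have hdne : L.dropLast ≠ [] := by
      intro h
      rw [h, List.nil_append] at hdecomp
      rw [← hdecomp] at hhd
      simp only [List.head?_cons, Option.some.injEq] at hhd
      exact hν hhd
    obtain ⟨μ, hμ⟩ : ∃ μ, L.dropLast.getLast? = some μ := by
      cases h : L.dropLast.getLast? with
      | none => exact absurd (List.getLast?_eq_none_iff.mp h) hdne
      | some μ => exact ⟨μ, rfl⟩
    have hch2 : List.Chain' YDCovers (L.dropLast ++ [ν]) := by rwa [hdecomp]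
    change List.IsChain _ _ at hch2
    rw [List.isChain_append] at hch2
    have hcov : YDCovers μ ν := by
      refine hch2.2.2 μ ?_ ν ?_
      · rwa [Option.mem_def]
      · simp
    obtain ⟨c, hc, hμc⟩ := covers_iff.mp hcov
    refine ⟨⟨⟨c, hc⟩, ⟨L.dropLast, hch2.1, ?_, by rw [hμ, hμc]⟩⟩, ?_⟩
    · rw [← hdecomp, List.head?_append_of_ne_nil _ hdne] at hhd
      exact hhd
    · apply Subtype.ext
      exact hdecomp

lemma chainSet_finite : ∀ (n : ℕ) (ν : YoungDiagram), ν.card ≤ n → Finite (ChainSet ν) := by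
  intro n
  induction n with
  | zero =>
    intro ν hν
    have : ν = ⊥ := eq_bot_of_card_eq_zero (Nat.le_zero.mp hν)
    subst this
    have : Subsingleton (ChainSet ⊥) :=
      ⟨fun a b => Subtype.ext (by rw [chainSet_bot_eq a, chainSet_bot_eq b])⟩
    exact Finite.of_subsingleton
  | succ n ih =>
    intro ν hν
    by_cases hbot : ν = ⊥
    · subst hbot
      have : Subsingleton (ChainSet ⊥) :=
        ⟨fun a b => Subtype.ext (by rw [chainSet_bot_eq a, chainSet_bot_eq b])⟩
      exact Finite.of_subsingleton
    · have hfib : ∀ c : {c // c ∈ corners ν}, Finite (ChainSet (eraseCell ν c.1 c.2)) := by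
        intro c
        apply ih
        rw [card_eraseCell]
        have : 0 < ν.card := by
          rcases Nat.eq_zero_or_pos ν.card with h | h
          · exact absurd (eq_bot_of_card_eq_zero h) hbot
          · exact h
        omega
      haveI := hfib
      exact Finite.of_surjective (toChain ν) (toChain_bijective hbot).2

lemma dimYD_rec (ν : YoungDiagram) (hν : ν ≠ ⊥) :
    dimYD ν = ∑ c ∈ (corners ν).attach, dimYD (eraseCell ν c.1 c.2) := by
  classical
  have hfib : ∀ c : {c // c ∈ corners ν}, Finite (ChainSet (eraseCell ν c.1 c.2)) := by
    intro c
    exact chainSet_finite _ _ le_rfl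
  haveI := hfib
  haveI : ∀ c : {c // c ∈ corners ν}, Fintype (ChainSet (eraseCell ν c.1 c.2)) :=
    fun c => Fintype.ofFinite _
  have hcard := Nat.card_eq_of_bijective (toChain ν) (toChain_bijective hν)
  rw [dimYD_eq, ← hcard, Nat.card_eq_fintype_card, Fintype.card_sigma]
  refine Finset.sum_congr (Finset.univ_eq_attach _) fun c _ => ?_
  rw [dimYD_eq, Nat.card_eq_fintype_card]

end HookAux


namespace HookAux

open Finset

def ell (Y : YoungDiagram) (m i : ℕ) : ℕ := Y.rowLen i + (m - 1 - i)

lemma mem_rc {Y : YoungDiagram} {k j : ℕ} : j < Y.rowLen k ↔ k < Y.colLen j :=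
  YoungDiagram.mem_iff_lt_rowLen.symm.trans YoungDiagram.mem_iff_lt_colLen

lemma rowLen_pos_iff {Y : YoungDiagram} {i : ℕ} : 0 < Y.rowLen i ↔ i < Y.colLen 0 :=
  mem_rc

lemma ell_strict {Y : YoungDiagram} {m i k : ℕ} (hik : i < k) (hk : k < m) :
    ell Y m k < ell Y m i := by
  have := Y.rowLen_anti i k (le_of_lt hik)
  unfold ell
  omega

lemma fact_prod (n : ℕ) : ∏ y ∈ Finset.range n, (n - y) = Nat.factorial n := by
  induction n with
  | zero => simp
  | succ n ih =>
    rw [Finset.prod_range_succ']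
    have : ∀ i ∈ Finset.range n, (n + 1 - (i + 1)) = n - i := fun i _ => by omega
    rw [Finset.prod_congr rfl this, ih, Nat.sub_zero, Nat.factorial_succ, mul_comm]

lemma row_hook_prod (Y : YoungDiagram) (m : ℕ) (hm : Y.colLen 0 ≤ m) {i : ℕ} (hi : i < m) :
    (∏ j ∈ Finset.range (Y.rowLen i), hookLen Y (i, j)) *
      (∏ k ∈ Finset.Ico (i + 1) m, (ell Y m i - ell Y m k)) = Nat.factorial (ell Y m i) := by
  classical
  set x : ℕ → ℕ := fun j => m + j - Y.colLen j with hx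
  have hcol : ∀ j, Y.colLen j ≤ m := fun j => (Y.colLen_anti 0 j (Nat.zero_le _)).trans hm
  have hxmono : ∀ {j j'}, j < j' → x j < x j' := by
    intro j j' hjj
    have h1 := Y.colLen_anti j j' (le_of_lt hjj)
    have h2 := hcol j
    simp only [hx]
    omega
  -- members of row i
  have hrow_col : ∀ {j}, j < Y.rowLen i → i < Y.colLen j := fun {j} h => mem_rc.mp h
  have h1 : ∀ j < Y.rowLen i, x j < ell Y m i := by
    intro j hj
    have := hrow_col hj
    have := hcol j
    simp only [hx]
    unfold ell
    omega
  have h2 : ∀ k, i < k → k < m → ell Y m k < ell Y m i := fun k h h' => ell_strict h h'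
  have h3 : ∀ j, j < Y.rowLen i → ∀ k, i < k → k < m → x j ≠ ell Y m k := by
    intro j hj k hik hkm heq
    simp only [hx] at heq
    unfold ell at heq
    have hcj := hcol j
    rcases Nat.lt_or_ge j (Y.rowLen k) with hc | hc
    · have := mem_rc.mp hc  -- k < colLen j
      omega
    · have hck : Y.colLen j ≤ k := by
        by_contra hcon
        push_neg at hcon
        have := mem_rc.mpr hcon
        omega
      omega
  set A := (Finset.range (Y.rowLen i)).image x with hA
  set B := (Finset.Ico (i + 1) m).image (ell Y m) with hB
  have hcardA : A.card = Y.rowLen i := by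
    rw [hA, Finset.card_image_of_injOn, Finset.card_range]
    intro a ha b hb hab
    rcases Nat.lt_trichotomy a b with h | h | h
    · exact absurd hab (Nat.ne_of_lt (hxmono h))
    · exact h
    · exact absurd hab.symm (Nat.ne_of_lt (hxmono h))
  have hcardB : B.card = m - (i + 1) := by
    rw [hB, Finset.card_image_of_injOn, Nat.card_Ico]
    intro a ha b hb hab
    rw [Finset.coe_Ico, Set.mem_Ico] at ha hb
    rcases Nat.lt_trichotomy a b with h | h | h
    · exact absurd hab.symm (Nat.ne_of_lt (ell_strict h hb.2))
    · exact h
    · exact absurd hab (Nat.ne_of_lt (ell_strict h ha.2))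
  have hdisj : Disjoint A B := by
    rw [Finset.disjoint_left]
    intro y hy hy'
    rw [hA, Finset.mem_image] at hy
    rw [hB, Finset.mem_image] at hy'
    obtain ⟨j, hj, rfl⟩ := hy
    obtain ⟨k, hk, hk2⟩ := hy'
    rw [Finset.mem_range] at hj
    rw [Finset.mem_Ico] at hk
    exact h3 j hj k hk.1 hk.2 hk2.symm
  have hsub : A ∪ B ⊆ Finset.range (ell Y m i) := by
    intro y hy
    rw [Finset.mem_union] at hy
    rw [Finset.mem_range]
    rcases hy with hy | hy
    · rw [hA, Finset.mem_image] at hy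
      obtain ⟨j, hj, rfl⟩ := hy
      exact h1 j (Finset.mem_range.mp hj)
    · rw [hB, Finset.mem_image] at hy
      obtain ⟨k, hk, rfl⟩ := hy
      rw [Finset.mem_Ico] at hk
      exact h2 k hk.1 hk.2
  have hunion : A ∪ B = Finset.range (ell Y m i) := by
    apply Finset.eq_of_subset_of_card_le hsub
    rw [Finset.card_range, Finset.card_union_of_disjoint hdisj, hcardA, hcardB]
    unfold ell
    omega
  -- hook lengths
  have hhook : ∀ j ∈ Finset.range (Y.rowLen i), hookLen Y (i, j) = ell Y m i - x j := by
    intro j hj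
    rw [Finset.mem_range] at hj
    have hcj := hrow_col hj
    have := hcol j
    simp only [hookLen, armLen, legLen, hx]
    unfold ell
    omega
  rw [Finset.prod_congr rfl hhook]
  have e1 : ∏ j ∈ Finset.range (Y.rowLen i), (ell Y m i - x j)
      = ∏ y ∈ A, (ell Y m i - y) := by
    rw [hA, Finset.prod_image]
    intro a ha b hb hab
    rcases Nat.lt_trichotomy a b with h | h | h
    · exact absurd hab (Nat.ne_of_lt (hxmono h))
    · exact h
    · exact absurd hab.symm (Nat.ne_of_lt (hxmono h))
  have e2 : ∏ k ∈ Finset.Ico (i + 1) m, (ell Y m i - ell Y m k)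
      = ∏ y ∈ B, (ell Y m i - y) := by
    rw [hB, Finset.prod_image]
    intro a ha b hb hab
    rw [Finset.mem_coe, Finset.mem_Ico] at ha hb
    rcases Nat.lt_trichotomy a b with h | h | h
    · exact absurd hab.symm (Nat.ne_of_lt (ell_strict h hb.2))
    · exact h
    · exact absurd hab (Nat.ne_of_lt (ell_strict h ha.2))
  rw [e1, e2, ← Finset.prod_union hdisj, hunion, fact_prod]

lemma cells_decomp (Y : YoungDiagram) (m : ℕ) (hm : Y.colLen 0 ≤ m) :
    Y.cells = (Finset.range m).biUnion
      (fun i => (Finset.range (Y.rowLen i)).image (fun j => (i, j))) := by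
  ext ⟨a, b⟩
  simp only [Finset.mem_biUnion, Finset.mem_range, Finset.mem_image, Prod.mk.injEq]
  constructor
  · intro h
    rw [YoungDiagram.mem_cells] at h
    have hb : b < Y.rowLen a := YoungDiagram.mem_iff_lt_rowLen.mp h
    have ha : a < Y.colLen 0 := rowLen_pos_iff.mp (by omega)
    exact ⟨a, by omega, b, hb, rfl, rfl⟩
  · rintro ⟨i, hi, j, hj, rfl, rfl⟩
    rw [YoungDiagram.mem_cells]
    exact YoungDiagram.mem_iff_lt_rowLen.mpr hj

lemma pairwise_disj (Y : YoungDiagram) (m : ℕ) :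
    Set.PairwiseDisjoint ↑(Finset.range m)
      (fun i => (Finset.range (Y.rowLen i)).image (fun j => (i, j))) := by
  intro a _ b _ hab
  rw [Function.onFun, Finset.disjoint_left]
  rintro ⟨u, v⟩ hu hv
  rw [Finset.mem_image] at hu hv
  obtain ⟨j, _, hj2⟩ := hu
  obtain ⟨j', _, hj2'⟩ := hv
  exact hab ((Prod.ext_iff.mp hj2).1.trans (Prod.ext_iff.mp hj2').1.symm)

lemma prod_cells {M : Type*} [CommMonoid M] (Y : YoungDiagram) (m : ℕ)
    (hm : Y.colLen 0 ≤ m) (f : ℕ × ℕ → M) :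
    ∏ b ∈ Y.cells, f b = ∏ i ∈ Finset.range m, ∏ j ∈ Finset.range (Y.rowLen i), f (i, j) := by
  rw [cells_decomp Y m hm, Finset.prod_biUnion (pairwise_disj Y m)]
  refine Finset.prod_congr rfl fun i _ => ?_
  rw [Finset.prod_image]
  intro a _ b _ hab
  exact (Prod.ext_iff.mp hab).2

lemma card_cells (Y : YoungDiagram) (m : ℕ) (hm : Y.colLen 0 ≤ m) :
    Y.card = ∑ i ∈ Finset.range m, Y.rowLen i := by
  show Y.cells.card = _
  rw [cells_decomp Y m hm, Finset.card_biUnion (pairwise_disj Y m)]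
  refine Finset.sum_congr rfl fun i _ => ?_
  rw [Finset.card_image_of_injective _ (fun a b hab => (Prod.ext_iff.mp hab).2),
    Finset.card_range]

lemma rowLen_eq_of {μ : YoungDiagram} {i k : ℕ} (h : ∀ j, (i, j) ∈ μ ↔ j < k) :
    μ.rowLen i = k := by
  rcases Nat.lt_trichotomy (μ.rowLen i) k with hl | he | hg
  · have := (h (μ.rowLen i)).mpr hl
    rw [YoungDiagram.mem_iff_lt_rowLen] at this
    omega
  · exact he
  · have := YoungDiagram.mem_iff_lt_rowLen.mpr hg
    rw [h k] at this
    omega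

end HookAux

namespace HookAux

open Finset

lemma erase_range_split {r m : ℕ} (hr : r < m) :
    (Finset.range m).erase r = Finset.range r ∪ Finset.Ico (r + 1) m := by
  ext a
  simp only [Finset.mem_erase, Finset.mem_range, Finset.mem_union, Finset.mem_Ico]
  omega

lemma disj_range_Ico {r m : ℕ} : Disjoint (Finset.range r) (Finset.Ico (r + 1) m) := by
  rw [Finset.disjoint_left]
  intro a ha hb
  rw [Finset.mem_range] at ha
  rw [Finset.mem_Ico] at hb
  omega

lemma double_split (w : ℕ → ℝ) {r m : ℕ} (hr : r < m) :
    ∏ i ∈ Finset.range m, ∏ k ∈ Finset.Ico (i + 1) m, (w i - w k)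
      = ((∏ i ∈ Finset.range r, (w i - w r)) * (∏ k ∈ Finset.Ico (r + 1) m, (w r - w k)))
        * ∏ i ∈ (Finset.range m).erase r, ∏ k ∈ (Finset.Ico (i + 1) m).erase r, (w i - w k) := by
  rw [← Finset.mul_prod_erase (Finset.range m) _ (Finset.mem_range.mpr hr)]
  have hstep : ∀ i ∈ (Finset.range m).erase r,
      ∏ k ∈ Finset.Ico (i + 1) m, (w i - w k)
        = (if i < r then (w i - w r) else 1) *
            ∏ k ∈ (Finset.Ico (i + 1) m).erase r, (w i - w k) := by
    intro i hi
    rw [Finset.mem_erase, Finset.mem_range] at hi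
    split_ifs with hir
    · rw [← Finset.mul_prod_erase (Finset.Ico (i + 1) m) _
        (Finset.mem_Ico.mpr ⟨by omega, hr⟩)]
    · rw [one_mul, Finset.erase_eq_of_notMem]
      rw [Finset.mem_Ico]
      omega
  rw [Finset.prod_congr rfl hstep, Finset.prod_mul_distrib]
  have hsubRI : Finset.range r ⊆ (Finset.range m).erase r := by
    intro a ha
    rw [Finset.mem_range] at ha
    rw [Finset.mem_erase, Finset.mem_range]
    omega
  have hif : ∏ i ∈ (Finset.range m).erase r, (if i < r then (w i - w r) else 1)
      = ∏ i ∈ Finset.range r, (w i - w r) := by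
    rw [← Finset.prod_subset hsubRI (fun a _ ha' => if_neg (Finset.mem_range.not.mp ha'))]
    exact Finset.prod_congr rfl fun i hi => if_pos (Finset.mem_range.mp hi)
  rw [hif]
  ring

lemma global_prod (Y : YoungDiagram) (m : ℕ) (hm : Y.colLen 0 ≤ m) :
    (∏ b ∈ Y.cells, (hookLen Y b : ℝ)) *
      (∏ i ∈ Finset.range m, ∏ k ∈ Finset.Ico (i + 1) m,
        ((ell Y m i : ℝ) - (ell Y m k : ℝ)))
      = ∏ i ∈ Finset.range m, (Nat.factorial (ell Y m i) : ℝ) := by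
  have hN : ∀ i ∈ Finset.range m,
      (∏ j ∈ Finset.range (Y.rowLen i), hookLen Y (i, j)) *
        (∏ k ∈ Finset.Ico (i + 1) m, (ell Y m i - ell Y m k)) = Nat.factorial (ell Y m i) :=
    fun i hi => row_hook_prod Y m hm (Finset.mem_range.mp hi)
  have hEq := Finset.prod_congr rfl hN
  rw [Finset.prod_mul_distrib] at hEq
  have hcast := congrArg (fun t : ℕ => (t : ℝ)) hEq
  simp only [Nat.cast_prod, Nat.cast_mul] at hcast
  have hsubs : ∀ i ∈ Finset.range m,
      ∏ k ∈ Finset.Ico (i + 1) m, ((ell Y m i - ell Y m k : ℕ) : ℝ)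
        = ∏ k ∈ Finset.Ico (i + 1) m, ((ell Y m i : ℝ) - (ell Y m k : ℝ)) := by
    intro i hi
    refine Finset.prod_congr rfl fun k hk => ?_
    rw [Finset.mem_Ico] at hk
    rw [Nat.cast_sub (le_of_lt (ell_strict hk.1 hk.2))]
  rw [Finset.prod_congr rfl hsubs] at hcast
  rw [← hcast, prod_cells Y m hm (fun b => (hookLen Y b : ℝ))]

lemma prodpos_ne_zero (Y : YoungDiagram) (m : ℕ) :
    (∏ i ∈ Finset.range m, ∏ k ∈ Finset.Ico (i + 1) m,
      ((ell Y m i : ℝ) - (ell Y m k : ℝ))) ≠ 0 := by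
  apply Finset.prod_ne_zero_iff.mpr
  intro i hi
  apply Finset.prod_ne_zero_iff.mpr
  intro k hk
  rw [Finset.mem_Ico] at hk
  have := ell_strict (Y := Y) (m := m) hk.1 hk.2
  have : (ell Y m k : ℝ) < (ell Y m i : ℝ) := by exact_mod_cast this
  intro h
  linarith

lemma hook_ratio (Y Y' : YoungDiagram) (m r : ℕ)
    (hm : Y.colLen 0 ≤ m) (hm' : Y'.colLen 0 ≤ m) (hr : r < m)
    (hpos : 0 < Y.rowLen r)
    (hrow : ∀ i, Y'.rowLen i = if i = r then Y.rowLen r - 1 else Y.rowLen i) :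
    (∏ b ∈ Y.cells, (hookLen Y b : ℝ))
      = (∏ b ∈ Y'.cells, (hookLen Y' b : ℝ)) *
        ((ell Y m r : ℝ) * ∏ j ∈ (Finset.range m).erase r,
          (((ell Y m r : ℝ) - 1 - (ell Y m j : ℝ)) / ((ell Y m r : ℝ) - (ell Y m j : ℝ)))) := by
  set x : ℕ → ℝ := fun i => (ell Y m i : ℝ) with hxdef
  set x' : ℕ → ℝ := fun i => (ell Y' m i : ℝ) with hx'def
  have hellr : 1 ≤ ell Y m r := by unfold ell; omega
  have hell' : ∀ i, ell Y' m i = if i = r then ell Y m r - 1 else ell Y m i := by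
    intro i
    unfold ell
    rw [hrow i]
    split_ifs
    · omega
    · rfl
  have hx'r : x' r = x r - 1 := by
    have h := hell' r
    rw [if_pos rfl] at h
    simp only [hx'def, hxdef]
    rw [h, Nat.cast_sub hellr, Nat.cast_one]
  have hx'ne : ∀ i, i ≠ r → x' i = x i := by
    intro i hi
    have h := hell' i
    rw [if_neg hi] at h
    simp only [hx'def, hxdef]
    rw [h]
  set HY := ∏ b ∈ Y.cells, (hookLen Y b : ℝ) with hHY
  set HY' := ∏ b ∈ Y'.cells, (hookLen Y' b : ℝ) with hHY'
  set DY := ∏ i ∈ Finset.range m, ∏ k ∈ Finset.Ico (i + 1) m, (x i - x k) with hDY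
  set DY' := ∏ i ∈ Finset.range m, ∏ k ∈ Finset.Ico (i + 1) m, (x' i - x' k) with hDY'
  set PN := ∏ j ∈ (Finset.range m).erase r, (x r - x j) with hPN
  set PN' := ∏ j ∈ (Finset.range m).erase r, (x r - 1 - x j) with hPN'
  have HD : HY * DY = ∏ i ∈ Finset.range m, (Nat.factorial (ell Y m i) : ℝ) :=
    global_prod Y m hm
  have HD' : HY' * DY' = ∏ i ∈ Finset.range m, (Nat.factorial (ell Y' m i) : ℝ) :=
    global_prod Y' m hm'
  -- factorial ratio
  have hLY : ∏ i ∈ Finset.range m, (Nat.factorial (ell Y m i) : ℝ)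
      = x r * ∏ i ∈ Finset.range m, (Nat.factorial (ell Y' m i) : ℝ) := by
    rw [← Finset.mul_prod_erase (Finset.range m)
        (fun i => (Nat.factorial (ell Y m i) : ℝ)) (Finset.mem_range.mpr hr),
      ← Finset.mul_prod_erase (Finset.range m)
        (fun i => (Nat.factorial (ell Y' m i) : ℝ)) (Finset.mem_range.mpr hr)]
    have h1 : ∏ i ∈ (Finset.range m).erase r, (Nat.factorial (ell Y' m i) : ℝ)
        = ∏ i ∈ (Finset.range m).erase r, (Nat.factorial (ell Y m i) : ℝ) := by
      refine Finset.prod_congr rfl fun i hi => ?_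
      rw [hell' i, if_neg (Finset.mem_erase.mp hi).1]
    rw [h1]
    have h2 : Nat.factorial (ell Y m r) = ell Y m r * Nat.factorial (ell Y' m r) := by
      rw [hell' r, if_pos rfl]
      exact (Nat.mul_factorial_pred (by omega)).symm
    calc (Nat.factorial (ell Y m r) : ℝ) * ∏ i ∈ (Finset.range m).erase r,
            (Nat.factorial (ell Y m i) : ℝ)
        = ((ell Y m r * Nat.factorial (ell Y' m r) : ℕ) : ℝ) *
            ∏ i ∈ (Finset.range m).erase r, (Nat.factorial (ell Y m i) : ℝ) := by rw [← h2]
      _ = _ := by push_cast; ring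
  -- Vandermonde ratio
  have hD : DY' * PN = DY * PN' := by
    rw [hDY, hDY', double_split x hr, double_split x' hr]
    have hrest : ∏ i ∈ (Finset.range m).erase r, ∏ k ∈ (Finset.Ico (i + 1) m).erase r,
        (x' i - x' k)
        = ∏ i ∈ (Finset.range m).erase r, ∏ k ∈ (Finset.Ico (i + 1) m).erase r, (x i - x k) := by
      refine Finset.prod_congr rfl fun i hi => Finset.prod_congr rfl fun k hk => ?_
      rw [hx'ne i (Finset.mem_erase.mp hi).1, hx'ne k (Finset.mem_erase.mp hk).1]
    rw [hrest]
    have hA' : ∏ i ∈ Finset.range r, (x' i - x' r) = ∏ i ∈ Finset.range r, (x i - (x r - 1)) := by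
      refine Finset.prod_congr rfl fun i hi => ?_
      rw [Finset.mem_range] at hi
      rw [hx'ne i (by omega), hx'r]
    have hB' : ∏ k ∈ Finset.Ico (r + 1) m, (x' r - x' k)
        = ∏ k ∈ Finset.Ico (r + 1) m, ((x r - 1) - x k) := by
      refine Finset.prod_congr rfl fun k hk => ?_
      rw [Finset.mem_Ico] at hk
      rw [hx'ne k (by omega), hx'r]
    rw [hA', hB']
    have hPNsplit : PN = (∏ i ∈ Finset.range r, (x r - x i)) *
        ∏ k ∈ Finset.Ico (r + 1) m, (x r - x k) := by
      rw [hPN, erase_range_split hr, Finset.prod_union disj_range_Ico]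
    have hPN'split : PN' = (∏ i ∈ Finset.range r, (x r - 1 - x i)) *
        ∏ k ∈ Finset.Ico (r + 1) m, (x r - 1 - x k) := by
      rw [hPN', erase_range_split hr, Finset.prod_union disj_range_Ico]
    rw [hPNsplit, hPN'split]
    have e1 : (∏ i ∈ Finset.range r, (x i - (x r - 1))) * (∏ i ∈ Finset.range r, (x r - x i))
        = (∏ i ∈ Finset.range r, (x i - x r)) * (∏ i ∈ Finset.range r, (x r - 1 - x i)) := by
      rw [← Finset.prod_mul_distrib, ← Finset.prod_mul_distrib]
      exact Finset.prod_congr rfl fun i _ => by ring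
    have e2 : (∏ k ∈ Finset.Ico (r + 1) m, ((x r - 1) - x k)) *
          (∏ k ∈ Finset.Ico (r + 1) m, (x r - x k))
        = (∏ k ∈ Finset.Ico (r + 1) m, (x r - x k)) *
          (∏ k ∈ Finset.Ico (r + 1) m, (x r - 1 - x k)) := by
      ring
    calc (∏ i ∈ Finset.range r, (x i - (x r - 1))) * (∏ k ∈ Finset.Ico (r + 1) m, ((x r - 1) - x k)) *
          (∏ i ∈ (Finset.range m).erase r, ∏ k ∈ (Finset.Ico (i + 1) m).erase r, (x i - x k)) *
          ((∏ i ∈ Finset.range r, (x r - x i)) * ∏ k ∈ Finset.Ico (r + 1) m, (x r - x k))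
        = ((∏ i ∈ Finset.range r, (x i - (x r - 1))) * (∏ i ∈ Finset.range r, (x r - x i))) *
          ((∏ k ∈ Finset.Ico (r + 1) m, ((x r - 1) - x k)) * (∏ k ∈ Finset.Ico (r + 1) m, (x r - x k))) *
          (∏ i ∈ (Finset.range m).erase r, ∏ k ∈ (Finset.Ico (i + 1) m).erase r, (x i - x k)) := by
          ring
      _ = ((∏ i ∈ Finset.range r, (x i - x r)) * (∏ i ∈ Finset.range r, (x r - 1 - x i))) *
          ((∏ k ∈ Finset.Ico (r + 1) m, (x r - x k)) * (∏ k ∈ Finset.Ico (r + 1) m, (x r - 1 - x k))) *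
          (∏ i ∈ (Finset.range m).erase r, ∏ k ∈ (Finset.Ico (i + 1) m).erase r, (x i - x k)) := by
          rw [e1, e2]
      _ = _ := by ring
  -- nonvanishing
  have hDY0 : DY ≠ 0 := prodpos_ne_zero Y m
  have hDY'0 : DY' ≠ 0 := prodpos_ne_zero Y' m
  have hPN0 : PN ≠ 0 := by
    rw [hPN]
    apply Finset.prod_ne_zero_iff.mpr
    intro j hj
    rw [Finset.mem_erase, Finset.mem_range] at hj
    intro h
    have hxy : (ell Y m r : ℝ) = (ell Y m j : ℝ) := by
      simp only [hxdef] at h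
      exact sub_eq_zero.mp h
    have heq : ell Y m j = ell Y m r := by exact_mod_cast hxy.symm
    rcases Nat.lt_trichotomy j r with hcase | hcase | hcase
    · exact absurd heq (Nat.ne_of_gt (ell_strict hcase hr))
    · exact hj.1 hcase
    · exact absurd heq (Nat.ne_of_lt (ell_strict hcase hj.2))
  -- conclude
  have hquot : ∏ j ∈ (Finset.range m).erase r, ((x r - 1 - x j) / (x r - x j)) = PN' / PN := by
    rw [hPN', hPN, Finset.prod_div_distrib]
  show HY = HY' * (x r * ∏ j ∈ (Finset.range m).erase r, ((x r - 1 - x j) / (x r - x j)))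
  rw [hquot]
  apply mul_right_cancel₀ (mul_ne_zero hDY0 hPN0)
  have hstep : (x r * (PN' / PN)) * PN = x r * PN' := by
    rw [mul_assoc, div_mul_cancel₀ _ hPN0]
  calc HY * (DY * PN) = (HY * DY) * PN := by ring
    _ = (∏ i ∈ Finset.range m, (Nat.factorial (ell Y m i) : ℝ)) * PN := by rw [HD]
    _ = (x r * ∏ i ∈ Finset.range m, (Nat.factorial (ell Y' m i) : ℝ)) * PN := by rw [hLY]
    _ = x r * ((HY' * DY') * PN) := by rw [HD']; ring
    _ = x r * (HY' * (DY' * PN)) := by ring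
    _ = x r * (HY' * (DY * PN')) := by rw [hD]
    _ = HY' * ((x r * (PN' / PN)) * PN) * DY := by rw [hstep]; ring
    _ = HY' * (x r * (PN' / PN)) * (DY * PN) := by ring

end HookAux

namespace HookAux

open Finset

lemma colLen_zero_le_card (Y : YoungDiagram) : Y.colLen 0 ≤ Y.card := by
  rw [YoungDiagram.colLen_eq_card]
  show (Y.col 0).card ≤ Y.cells.card
  apply Finset.card_le_card
  intro c hc
  rw [YoungDiagram.mem_col_iff] at hc
  exact (YoungDiagram.mem_cells c).mpr hc.1

lemma colLen_zero_mono {Y Y' : YoungDiagram} (h : ∀ p : ℕ × ℕ, p ∈ Y' → p ∈ Y) :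
    Y'.colLen 0 ≤ Y.colLen 0 := by
  by_contra hcon
  push_neg at hcon
  have hmem : (Y.colLen 0, 0) ∈ Y' := YoungDiagram.mem_iff_lt_colLen.mpr hcon
  have := YoungDiagram.mem_iff_lt_colLen.mp (h _ hmem)
  omega

lemma rowLen_eraseCell {Y : YoungDiagram} {r : ℕ}
    (hc : (r, Y.rowLen r - 1) ∈ corners Y) (hpos : 0 < Y.rowLen r) (i : ℕ) :
    (eraseCell Y (r, Y.rowLen r - 1) hc).rowLen i
      = if i = r then Y.rowLen r - 1 else Y.rowLen i := by
  apply rowLen_eq_of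
  intro j
  rw [mem_eraseCell]
  split_ifs with hir
  · subst hir
    constructor
    · rintro ⟨hmem, hne⟩
      have h1 := YoungDiagram.mem_iff_lt_rowLen.mp hmem
      have h2 : j ≠ Y.rowLen i - 1 := fun hj => hne (by rw [hj])
      omega
    · intro hj
      refine ⟨YoungDiagram.mem_iff_lt_rowLen.mpr (by omega), fun hj2 => ?_⟩
      have := (Prod.ext_iff.mp hj2).2
      omega
  · constructor
    · rintro ⟨hmem, _⟩
      exact YoungDiagram.mem_iff_lt_rowLen.mp hmem
    · intro hj
      exact ⟨YoungDiagram.mem_iff_lt_rowLen.mpr hj, fun h => hir (Prod.ext_iff.mp h).1⟩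

def Rset (Y : YoungDiagram) (m : ℕ) : Finset ℕ :=
  (Finset.range m).filter fun r => Y.rowLen (r + 1) < Y.rowLen r

lemma corner_mem_of_Rset {Y : YoungDiagram} {m r : ℕ} (hr : r ∈ Rset Y m) :
    (r, Y.rowLen r - 1) ∈ corners Y := by
  rw [Rset, Finset.mem_filter, Finset.mem_range] at hr
  obtain ⟨hrm, hlt⟩ := hr
  rw [mem_corners]
  refine ⟨YoungDiagram.mem_iff_lt_rowLen.mpr (by omega), ?_, ?_⟩
  · intro h
    have := YoungDiagram.mem_iff_lt_rowLen.mp h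
    simp only at this
    have hanti := Y.rowLen_anti r (r + 1) (by omega)
    omega
  · intro h
    have := YoungDiagram.mem_iff_lt_rowLen.mp h
    simp only at this
    omega

lemma corners_char {Y : YoungDiagram} {m : ℕ} (hm : Y.colLen 0 ≤ m) {c : ℕ × ℕ}
    (hc : c ∈ corners Y) : c.1 ∈ Rset Y m ∧ c.2 = Y.rowLen c.1 - 1 := by
  obtain ⟨a, b⟩ := c
  rw [mem_corners] at hc
  obtain ⟨hmem, hc1, hc2⟩ := hc
  simp only at hmem hc1 hc2 ⊢
  have h1 : b < Y.rowLen a := YoungDiagram.mem_iff_lt_rowLen.mp hmem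
  have h2 : ¬ (b + 1 < Y.rowLen a) := fun h => hc2 (YoungDiagram.mem_iff_lt_rowLen.mpr h)
  have h3 : ¬ (b < Y.rowLen (a + 1)) := fun h => hc1 (YoungDiagram.mem_iff_lt_rowLen.mpr h)
  have h4 : a < Y.colLen 0 := rowLen_pos_iff.mp (by omega)
  constructor
  · rw [Rset, Finset.mem_filter, Finset.mem_range]
    exact ⟨by omega, by omega⟩
  · omega

lemma eraseCell_eq_of {Y : YoungDiagram} {c c' : ℕ × ℕ} (h : c = c')
    (hc : c ∈ corners Y) (hc' : c' ∈ corners Y) :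
    eraseCell Y c hc = eraseCell Y c' hc' := by subst h; rfl

/-- unconditional corner-erasure by row -/
noncomputable def eraseRow (Y : YoungDiagram) (m r : ℕ) : YoungDiagram :=
  if h : r ∈ Rset Y m then eraseCell Y (r, Y.rowLen r - 1) (corner_mem_of_Rset h) else Y

lemma eraseRow_eq {Y : YoungDiagram} {m r : ℕ} (h : r ∈ Rset Y m) :
    eraseRow Y m r = eraseCell Y (r, Y.rowLen r - 1) (corner_mem_of_Rset h) :=
  dif_pos h

lemma dim_rec_Rset (Y : YoungDiagram) (m : ℕ) (hm : Y.colLen 0 ≤ m) (hY : Y ≠ ⊥) :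
    dimYD Y = ∑ r ∈ Rset Y m, dimYD (eraseRow Y m r) := by
  rw [dimYD_rec Y hY]
  refine Finset.sum_bij (i := fun c (_ : c ∈ (corners Y).attach) => c.1.1) ?_ ?_ ?_ ?_
  · intro a _
    exact (corners_char hm a.2).1
  · intro a _ b _ hab
    have hab' : (a.1 : ℕ × ℕ).1 = (b.1 : ℕ × ℕ).1 := hab
    have ha2 := (corners_char hm a.2).2
    have hb2 := (corners_char hm b.2).2
    apply Subtype.ext
    apply Prod.ext hab'
    rw [ha2, hb2, hab']
  · intro r hr
    exact ⟨⟨(r, Y.rowLen r - 1), corner_mem_of_Rset hr⟩, Finset.mem_attach _ _, rfl⟩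
  · intro a _
    have ha1 := (corners_char hm a.2).1
    have ha2 := (corners_char hm a.2).2
    rw [eraseRow_eq ha1]
    exact congrArg dimYD
      (eraseCell_eq_of (c := a.1) (c' := ((a.1 : ℕ × ℕ).1, Y.rowLen (a.1 : ℕ × ℕ).1 - 1))
        (Prod.ext_iff.mpr ⟨rfl, ha2⟩) a.2 (corner_mem_of_Rset ha1))

lemma term_vanish (Y : YoungDiagram) (m : ℕ) (hm : Y.colLen 0 ≤ m) {r : ℕ}
    (hrm : r < m) (hnot : r ∉ Rset Y m) :
    (ell Y m r : ℝ) * ∏ j ∈ (Finset.range m).erase r,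
      (((ell Y m r : ℝ) - 1 - (ell Y m j : ℝ)) / ((ell Y m r : ℝ) - (ell Y m j : ℝ))) = 0 := by
  rw [Rset, Finset.mem_filter, Finset.mem_range] at hnot
  push_neg at hnot
  have hge : Y.rowLen r ≤ Y.rowLen (r + 1) := hnot hrm
  rcases Nat.lt_or_ge (r + 1) m with hr1 | hr1
  · have hj : (r + 1) ∈ (Finset.range m).erase r := by
      rw [Finset.mem_erase, Finset.mem_range]
      omega
    have hval : ell Y m (r + 1) + 1 = ell Y m r := by
      have hanti := Y.rowLen_anti r (r + 1) (by omega)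
      have heq : Y.rowLen (r + 1) = Y.rowLen r := le_antisymm hanti hge
      unfold ell
      omega
    apply mul_eq_zero_of_right
    apply Finset.prod_eq_zero hj
    have hzero : (ell Y m r : ℝ) - 1 - (ell Y m (r + 1) : ℝ) = 0 := by
      have := congrArg (fun t : ℕ => (t : ℝ)) hval
      push_cast at this
      linarith
    rw [hzero, zero_div]
  · have hrow0 : Y.rowLen r = 0 := by
      by_contra h0
      have hpos1 : 0 < Y.rowLen (r + 1) := by omega
      have := rowLen_pos_iff.mp hpos1
      omega
    have hzero : ell Y m r = 0 := by unfold ell; omega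
    rw [hzero]
    simp

lemma gauss (m : ℕ) : ∑ r ∈ Finset.range m, (m - 1 - r) = m.choose 2 := by
  have h1 : ∑ r ∈ Finset.range m, (m - 1 - r) = ∑ r ∈ Finset.range m, r :=
    Finset.sum_range_reflect (fun r => r) m
  rw [h1, Nat.choose_two_right]
  have := Finset.sum_range_id_mul_two m
  omega

lemma ell_sum (Y : YoungDiagram) (m : ℕ) (hm : Y.colLen 0 ≤ m) :
    ∑ r ∈ Finset.range m, ell Y m r = Y.card + m.choose 2 := by
  unfold ell
  rw [Finset.sum_add_distrib, gauss, ← card_cells Y m hm]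

lemma main_prod : ∀ (n : ℕ) (Y : YoungDiagram), Y.card ≤ n →
    (dimYD Y : ℝ) * ∏ b ∈ Y.cells, (hookLen Y b : ℝ) = Nat.factorial Y.card := by
  intro n
  induction n with
  | zero =>
    intro Y hY
    have hbot : Y = ⊥ := eq_bot_of_card_eq_zero (Nat.le_zero.mp hY)
    subst hbot
    rw [dimYD_bot, bot_card]
    simp [YoungDiagram.cells_bot]
  | succ n ih =>
    intro Y hY
    by_cases hbot : Y = ⊥
    · subst hbot
      rw [dimYD_bot, bot_card]
      simp [YoungDiagram.cells_bot]
    have hn0pos : 0 < Y.card := by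
      rcases Nat.eq_zero_or_pos Y.card with h | h
      · exact absurd (eq_bot_of_card_eq_zero h) hbot
      · exact h
    set n0 := Y.card with hn0
    set m := n0 with hmdef
    have hm : Y.colLen 0 ≤ m := colLen_zero_le_card Y
    set T : ℕ → ℝ := fun r => (ell Y m r : ℝ) * ∏ j ∈ (Finset.range m).erase r,
      (((ell Y m r : ℝ) - 1 - (ell Y m j : ℝ)) / ((ell Y m r : ℝ) - (ell Y m j : ℝ))) with hT
    set HY := ∏ b ∈ Y.cells, (hookLen Y b : ℝ) with hHY
    -- facts about the erased diagrams
    have herase : ∀ r ∈ Rset Y m,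
        (eraseRow Y m r).card = n0 - 1 ∧
        (eraseRow Y m r).colLen 0 ≤ m ∧
        (∀ i, (eraseRow Y m r).rowLen i = if i = r then Y.rowLen r - 1 else Y.rowLen i) := by
      intro r hr
      have hrfl := eraseRow_eq hr
      have hrm : r < m := (Finset.mem_range.mp (Finset.mem_filter.mp hr).1)
      have hpos : 0 < Y.rowLen r := by
        have := (Finset.mem_filter.mp hr).2
        omega
      refine ⟨?_, ?_, ?_⟩
      · rw [hrfl, card_eraseCell]
      · apply le_trans (colLen_zero_mono ?_) hm
        intro p hp
        rw [hrfl] at hp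
        exact (mem_eraseCell _ |>.mp hp).1
      · intro i
        rw [hrfl]
        exact rowLen_eraseCell _ hpos i
    -- per-term computation
    have hterm : ∀ r ∈ Rset Y m,
        (dimYD (eraseRow Y m r) : ℝ) * HY = (Nat.factorial (n0 - 1) : ℝ) * T r := by
      intro r hr
      obtain ⟨hcard', hm', hrow'⟩ := herase r hr
      have hrm : r < m := (Finset.mem_range.mp (Finset.mem_filter.mp hr).1)
      have hpos : 0 < Y.rowLen r := by
        have := (Finset.mem_filter.mp hr).2
        omega
      have hratio := hook_ratio Y (eraseRow Y m r) m r hm hm' hrm hpos hrow'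
      have hih := ih (eraseRow Y m r) (by omega)
      rw [hcard'] at hih
      calc (dimYD (eraseRow Y m r) : ℝ) * HY
          = (dimYD (eraseRow Y m r) : ℝ) *
            ((∏ b ∈ (eraseRow Y m r).cells, (hookLen (eraseRow Y m r) b : ℝ)) * T r) := by
            rw [hHY, hratio]
        _ = ((dimYD (eraseRow Y m r) : ℝ) *
            ∏ b ∈ (eraseRow Y m r).cells, (hookLen (eraseRow Y m r) b : ℝ)) * T r := by ring
        _ = (Nat.factorial (n0 - 1) : ℝ) * T r := by rw [hih]
    -- injectivity for the key identity
    have hinj : Set.InjOn (fun i => (ell Y m i : ℝ)) (Finset.range m) := by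
      intro a ha b hb hab
      rw [Finset.coe_range, Set.mem_Iio] at ha hb
      simp only at hab
      have h : ell Y m a = ell Y m b := by exact_mod_cast hab
      rcases Nat.lt_trichotomy a b with hc | hc | hc
      · exact absurd h (Nat.ne_of_gt (ell_strict hc hb))
      · exact hc
      · exact absurd h (Nat.ne_of_lt (ell_strict hc ha))
    have hsum : ∑ r ∈ Finset.range m, T r = (n0 : ℝ) := by
      rw [hT]
      rw [key_identity m (fun i => (ell Y m i : ℝ)) hinj]
      have hes : ∑ r ∈ Finset.range m, ((ell Y m r : ℕ) : ℝ)
          = ((n0 + m.choose 2 : ℕ) : ℝ) := by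
        rw [← Nat.cast_sum, ell_sum Y m hm]
      rw [hes]
      push_cast
      ring
    have hsub : Rset Y m ⊆ Finset.range m := Finset.filter_subset _ _
    have hsum2 : ∑ r ∈ Rset Y m, T r = (n0 : ℝ) := by
      rw [← hsum]
      apply Finset.sum_subset hsub
      intro r hrm hrnot
      exact term_vanish Y m hm (Finset.mem_range.mp hrm) hrnot
    -- assemble
    rw [dim_rec_Rset Y m hm hbot]
    push_cast [Finset.sum_mul]
    calc ∑ r ∈ Rset Y m, (dimYD (eraseRow Y m r) : ℝ) * HY
        = ∑ r ∈ Rset Y m, (Nat.factorial (n0 - 1) : ℝ) * T r :=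
          Finset.sum_congr rfl hterm
      _ = (Nat.factorial (n0 - 1) : ℝ) * ∑ r ∈ Rset Y m, T r := by
          rw [Finset.mul_sum]
      _ = (Nat.factorial (n0 - 1) : ℝ) * (n0 : ℝ) := by rw [hsum2]
      _ = (Nat.factorial n0 : ℝ) := by
          have := Nat.mul_factorial_pred hn0pos.ne'
          calc (Nat.factorial (n0 - 1) : ℝ) * (n0 : ℝ)
              = ((n0 * Nat.factorial (n0 - 1) : ℕ) : ℝ) := by push_cast; ring
            _ = _ := by rw [this]

end HookAux

end HookProofAux

/-- The hook formula: `dim λ = n! ∏_{b∈λ} h(b)⁻¹` for every Young diagram `λ` with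
`n = |λ|` boxes. -/
theorem hook_formula (lam : YoungDiagram) (n : ℕ) (hn : n = lam.card) :
    (dimYD lam : ℝ) =
      (Nat.factorial n : ℝ) * ∏ b ∈ lam.cells, (hookLen lam b : ℝ)⁻¹ := by
  subst hn
  have h := HookAux.main_prod lam.card lam le_rfl
  have hne : (∏ b ∈ lam.cells, (hookLen lam b : ℝ)) ≠ 0 := by
    apply Finset.prod_ne_zero_iff.mpr
    intro b _
    have hb : hookLen lam b ≠ 0 := by unfold hookLen; omega
    exact Nat.cast_ne_zero.mpr hb
  rw [Finset.prod_inv_distrib, eq_mul_inv_iff_mul_eq₀ hne]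
  exact h
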